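/- If the model fits the unprotected normal subgroup and the unprotected anomaly subgroup (L_U = L_1^UN + L_0^UA, L_P = L_1^PN + L_0^PA), then the weight ε = (L_0^U - L_U)/((L_0^U - L_U) + (L_0^P - L_P)), where L_0^U = L_0^UN + L_0^UA and L_0^P = L_0^PN + L_0^PA, equals Δ^UN/(Δ^UN + Δ^PN), and this value lies strictly between Δ^UA/(Δ^UA + Δ^PN) and Δ^UN/(Δ^UN + Δ^PA). -/
import Mathlib

theorem epsilon_design_in_range
    (L0UN L1UN L0PN L1PN L0UA L1UA L0PA L1PA : ℝ)
    (ΔUN ΔPN ΔUA ΔPA : ℝ)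
    (hΔUN : ΔUN = L0UN - L1UN) (hΔPN : ΔPN = L0PN - L1PN)
    (hΔUA : ΔUA = L0UA - L1UA) (hΔPA : ΔPA = L0PA - L1PA)
    (hUN : 0 < ΔUN) (hPN : 0 < ΔPN) (hUA : 0 < ΔUA) (hPA : 0 < ΔPA)
    (h1 : ΔUN > ΔUA) (h2 : ΔPN > ΔPA)
    (LU LP L0U L0P ε : ℝ)
    (hLU : LU = L1UN + L0UA) (hLP : LP = L1PN + L0PA)
    (hL0U : L0U = L0UN + L0UA) (hL0P : L0P = L0PN + L0PA)
    (hε : ε = (L0U - LU) / ((L0U - LU) + (L0P - LP))) :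
    ε = ΔUN / (ΔUN + ΔPN) ∧
    ΔUA / (ΔUA + ΔPN) < ε ∧ ε < ΔUN / (ΔUN + ΔPA) := by
  have heq : ε = ΔUN / (ΔUN + ΔPN) := by
    rw [hε, hLU, hLP, hL0U, hL0P, hΔUN, hΔPN]; ring_nf
  refine ⟨heq, ?_, ?_⟩
  · rw [heq, div_lt_div_iff₀ (by linarith) (by linarith)]; nlinarith
  · rw [heq, div_lt_div_iff₀ (by linarith) (by linarith)]; nlinarith
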